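/- Let G = R ⋊_α C, let ω be the multiplicative order of α in R^×, and suppose ω = |C| and that for every integer k with α^k ≠ 1 we have (1 - α^k)² ≠ 0. Then R is a characteristic subgroup of G. -/

import Mathlib

/-- The action of a group `C` on `M` by additive automorphisms, packaged as a
homomorphism `C →* MulAut (Multiplicative M)`. -/
def sdAction (C M : Type*) [Group C] [AddCommGroup M] [DistribMulAction C M] :
    C →* MulAut (Multiplicative M) where
  toFun c := AddEquiv.toMultiplicative (DistribMulAction.toAddAut C M c)
  map_one' := by ext x; simp
  map_mul' c c' := by ext x; simp [mul_smul]

/-- Key computation: if `x` commutes with its conjugate by `inl 1`, then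
`(1 - χ x.right)² = 0`. -/
lemma stmt_17_aux {R C : Type*} [CommRing R] [Group C] (χ : C →* Rˣ)
    (x : Multiplicative R ⋊[(sdAction Rˣ R).comp χ] C)
    (hcom : Commute x (SemidirectProduct.inl (Multiplicative.ofAdd (1:R)) * x *
      (SemidirectProduct.inl (Multiplicative.ofAdd (1:R)))⁻¹)) :
    (1 - ((χ x.right : Rˣ) : R)) ^ 2 = 0 := by
  have h := congrArg (fun z => Multiplicative.toAdd z.left) hcom
  simp only [SemidirectProduct.mul_left, SemidirectProduct.inv_left, SemidirectProduct.mul_right, SemidirectProduct.inv_right, SemidirectProduct.left_inl, SemidirectProduct.right_inl] at h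
  simp [sdAction, Units.smul_def, mul_assoc] at h
  linear_combination -h

/-- If any element of the semidirect product commutes with its conjugate by `inl 1`,
then (under the hypotheses) its right component is trivial. -/
lemma stmt_17_aux2 {R C : Type*} [CommRing R] [Group C]
    (a : C) (hC : ∀ c : C, c ∈ Subgroup.zpowers a) (χ : C →* Rˣ)
    (hω : orderOf (χ a) = Nat.card C)
    (hsq : ∀ k : ℤ, (χ a) ^ k ≠ 1 → (1 - ((χ a ^ k : Rˣ) : R)) ^ 2 ≠ 0)
    (x : Multiplicative R ⋊[(sdAction Rˣ R).comp χ] C)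
    (hcom : Commute x (SemidirectProduct.inl (Multiplicative.ofAdd (1:R)) * x *
      (SemidirectProduct.inl (Multiplicative.ofAdd (1:R)))⁻¹)) :
    x.right = 1 := by
  obtain ⟨k, hk⟩ := Subgroup.mem_zpowers_iff.mp (hC x.right)
  have hkey := stmt_17_aux χ x hcom
  have hχ : (χ a) ^ k = 1 := by
    by_contra hne
    exact hsq k hne (by rwa [← map_zpow, hk])
  have hdvd : ((Nat.card C : ℤ)) ∣ k := by
    rw [← hω]; exact orderOf_dvd_iff_zpow_eq_one.mpr hχ
  obtain ⟨m, hm⟩ := hdvd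
  have : a ^ k = 1 := by
    rw [hm, zpow_mul, zpow_natCast, pow_card_eq_one', one_zpow]
  rw [← hk, this]

theorem stmt_17 {R C : Type*} [CommRing R] [Group C]
    (a : C) (hC : ∀ c : C, c ∈ Subgroup.zpowers a)
    (χ : C →* Rˣ)
    (hR : Subring.closure (Set.range fun c : C => ((χ c : R))) = ⊤)
    (hω : orderOf (χ a) = Nat.card C)
    (hsq : ∀ k : ℤ, (χ a) ^ k ≠ 1 → (1 - ((χ a ^ k : Rˣ) : R)) ^ 2 ≠ 0) :
    ∀ e : (Multiplicative R ⋊[(sdAction Rˣ R).comp χ] C) ≃*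
        (Multiplicative R ⋊[(sdAction Rˣ R).comp χ] C),
      Subgroup.map e.toMonoidHom
          (SemidirectProduct.inl :
            Multiplicative R →* Multiplicative R ⋊[(sdAction Rˣ R).comp χ] C).range =
        (SemidirectProduct.inl :
          Multiplicative R →* Multiplicative R ⋊[(sdAction Rˣ R).comp χ] C).range := by
  set G := Multiplicative R ⋊[(sdAction Rˣ R).comp χ] C
  -- membership in inl.range ↔ right component trivial
  have hmem : ∀ x : G, x ∈ (SemidirectProduct.inl : Multiplicative R →* G).range ↔
      x.right = 1 := by
    intro x
    rw [SemidirectProduct.range_inl_eq_ker_rightHom]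
    exact Iff.rfl
  -- any automorphism maps inl.range into itself
  have key : ∀ e : G ≃* G, Subgroup.map e.toMonoidHom
      (SemidirectProduct.inl : Multiplicative R →* G).range ≤
      (SemidirectProduct.inl : Multiplicative R →* G).range := by
    intro e x hx
    obtain ⟨y, hy, rfl⟩ := hx
    rw [hmem]
    apply stmt_17_aux2 a hC χ hω hsq
    set g : G := SemidirectProduct.inl (Multiplicative.ofAdd (1:R)) with hgdef
    have hyr : y.right = 1 := (hmem y).mp hy
    have hconjr : (e.symm g * y * (e.symm g)⁻¹) ∈
        (SemidirectProduct.inl : Multiplicative R →* G).range := by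
      rw [hmem]
      rw [SemidirectProduct.mul_right, SemidirectProduct.mul_right,
        SemidirectProduct.inv_right, hyr, mul_one, mul_inv_cancel]
    obtain ⟨u, hu⟩ := (hmem y).mpr hyr
    obtain ⟨v, hv⟩ := hconjr
    have hcy : Commute y (e.symm g * y * (e.symm g)⁻¹) := by
      rw [← hv, ← hu]
      exact (Commute.all u v).map SemidirectProduct.inl
    have h2 := congrArg e hcy.eq
    simp only [map_mul, map_inv, MulEquiv.apply_symm_apply] at h2
    show Commute (e y) (g * e y * g⁻¹)
    rw [Commute, SemiconjBy]
    rw [mul_assoc, mul_assoc] at h2 ⊢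
    exact h2
  intro e
  refine le_antisymm (key e) ?_
  intro x hx
  have hx' : e.symm x ∈ (SemidirectProduct.inl : Multiplicative R →* G).range :=
    key e.symm ⟨x, hx, rfl⟩
  exact ⟨e.symm x, hx', by simp⟩
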